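/- Let T=(V,E) be a finite tree with positive edge weights and shortest-path metric d, and let e=(u,v)∈E. Consider the 2-clustering of V whose two clusters are the vertex sets of the two connected components of T∖e (so u and v lie in different clusters). If both boundary vertices u and v are IP-stable in this clustering, then every vertex x∈V is IP-stable, i.e., the clustering is IP-stable. -/

import Mathlib

open Finset

open scoped Classical in
/-- The shortest-path (tree) metric induced on the vertices of a tree `G` with
edge weights `w`: the total weight of the unique path between two vertices. -/
noncomputable def treeDist {V : Type*} (G : SimpleGraph V) (hG : G.IsTree)
    (w : Sym2 V → ℝ) (u v : V) : ℝ :=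
  (((hG.existsUnique_path u v).exists.choose).edges.map w).sum

/-- A point `x` is IP-stable in the clustering `C` w.r.t. dissimilarity `d`. -/
def IPStablePt {α : Type*} [DecidableEq α] (d : α → α → ℝ) {k : ℕ}
    (C : Fin k → Finset α) (x : α) : Prop :=
  ∀ i : Fin k, x ∈ C i →
    (C i = {x} ∨
      ∀ j : Fin k, C j ≠ C i →
        (∑ y ∈ C i, d x y) / ((C i).card - 1 : ℝ) ≤
          (∑ y ∈ C j, d x y) / ((C j).card : ℝ))

namespace IPStableAux

open SimpleGraph

variable {V : Type*} [DecidableEq V] {G : SimpleGraph V} (hG : G.IsTree) (w : Sym2 V → ℝ)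

lemma td_eq_of_isPath {x y : V} (p : G.Walk x y) (hp : p.IsPath) :
    treeDist G hG w x y = (p.edges.map w).sum := by
  rw [treeDist,
    (hG.existsUnique_path x y).unique (hG.existsUnique_path x y).exists.choose_spec hp]

lemma td_self (x : V) : treeDist G hG w x x = 0 := by
  rw [td_eq_of_isPath hG w Walk.nil Walk.IsPath.nil]; simp

lemma td_nonneg (hw : ∀ e ∈ G.edgeSet, 0 < w e) (x y : V) :
    0 ≤ treeDist G hG w x y := by
  rw [treeDist]
  apply List.sum_nonneg
  intro a ha
  obtain ⟨e, he, rfl⟩ := List.mem_map.1 ha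
  exact (hw e (Walk.edges_subset_edgeSet _ he)).le

lemma sum_map_le {l₁ l₂ : List (Sym2 V)} (h1 : l₁.Nodup) (h2 : l₁ ⊆ l₂)
    (hnn : ∀ e ∈ l₂, 0 ≤ w e) : (l₁.map w).sum ≤ (l₂.map w).sum := by
  have hle2 : Multiset.map w (l₁ : Multiset (Sym2 V)) ≤ Multiset.map w (l₂ : Multiset (Sym2 V)) :=
    Multiset.map_le_map (Multiset.coe_le.2 (h1.subperm h2))
  obtain ⟨t, ht⟩ := Multiset.le_iff_exists_add.1 hle2
  have hts : 0 ≤ t.sum := by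
    apply Multiset.sum_nonneg
    intro a ha
    have : a ∈ Multiset.map w (l₂ : Multiset (Sym2 V)) := by
      rw [ht]; exact Multiset.mem_add.2 (Or.inr ha)
    obtain ⟨e, he, rfl⟩ := Multiset.mem_map.1 this
    exact hnn e (by exact_mod_cast he)
  have h3 : (Multiset.map w (l₂ : Multiset (Sym2 V))).sum
      = (Multiset.map w (l₁ : Multiset (Sym2 V))).sum + t.sum := by rw [ht, Multiset.sum_add]
  simp only [Multiset.map_coe, Multiset.sum_coe] at h3
  linarith

lemma td_triangle (hw : ∀ e ∈ G.edgeSet, 0 < w e) (x y z : V) :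
    treeDist G hG w x z ≤ treeDist G hG w x y + treeDist G hG w y z := by
  set p := (hG.existsUnique_path x y).exists.choose
  set q := (hG.existsUnique_path y z).exists.choose
  have hxz : treeDist G hG w x z = (((p.append q).bypass).edges.map w).sum :=
    td_eq_of_isPath hG w _ (Walk.bypass_isPath _)
  rw [hxz, treeDist, treeDist]
  have := sum_map_le w ((Walk.bypass_isPath (p.append q)).isTrail.edges_nodup)
    (Walk.edges_bypass_subset _)
    (fun e he => (hw e (Walk.edges_subset_edgeSet _ he)).le)
  calc ((p.append q).bypass.edges.map w).sum ≤ ((p.append q).edges.map w).sum := this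
    _ = (p.edges.map w).sum + (q.edges.map w).sum := by
        rw [Walk.edges_append, List.map_append, List.sum_append]

lemma reachable_of_mem_support {x y a : V} (p : G.Walk x y) (ha : a ∈ p.support) :
    G.Reachable x a := by
  classical
  exact ⟨p.takeUntil a ha⟩

include hG in
lemma not_reachable_delete {u v : V} (huv : G.Adj u v) :
    ¬ (G.deleteEdges {s(u, v)}).Reachable u v := by
  have hb := (isAcyclic_iff_forall_adj_isBridge.1 hG.2) huv
  exact isBridge_iff.1 hb

lemma td_split {u v x y : V} (huv : G.Adj u v)
    (hx : (G.deleteEdges {s(u, v)}).Reachable u x)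
    (hy : (G.deleteEdges {s(u, v)}).Reachable v y) :
    treeDist G hG w x y = treeDist G hG w x u + w s(u, v) + treeDist G hG w v y := by
  classical
  set G' := G.deleteEdges {s(u, v)} with hG'
  have hGle : G' ≤ G := deleteEdges_le _
  have hbr : ¬ G'.Reachable u v := not_reachable_delete hG huv
  obtain ⟨p0⟩ := hx.symm
  obtain ⟨q0⟩ := hy
  set p : G'.Walk x u := p0.bypass with hp_def
  set q : G'.Walk v y := q0.bypass with hq_def
  have hp : p.IsPath := Walk.bypass_isPath _
  have hq : q.IsPath := Walk.bypass_isPath _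
  set p' : G.Walk x u := p.mapLe hGle with hp'_def
  set q' : G.Walk v y := q.mapLe hGle with hq'_def
  have hp' : p'.IsPath := hp.mapLe hGle
  have hq' : q'.IsPath := hq.mapLe hGle
  have hid : ⇑(Hom.ofLE hGle) = id := rfl
  have hps : p'.support = p.support := by
    rw [hp'_def, Walk.mapLe, Walk.support_map, hid, List.map_id]
  have hqs : q'.support = q.support := by
    rw [hq'_def, Walk.mapLe, Walk.support_map, hid, List.map_id]
  have hdisj : ∀ a ∈ p.support, ∀ b ∈ q.support, a ≠ b := by
    intro a ha b hb hab
    apply hbr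
    have h1 : G'.Reachable x a := reachable_of_mem_support p ha
    have h2 : G'.Reachable v b := reachable_of_mem_support q hb
    exact (hx.trans h1).trans (hab ▸ h2.symm)
  set W : G.Walk x y := p'.append (Walk.cons huv q') with hW_def
  have hW : W.IsPath := by
    rw [Walk.isPath_def, hW_def, Walk.support_append, Walk.support_cons, List.tail_cons,
      List.nodup_append]
    refine ⟨hps ▸ hp.support_nodup, hqs ▸ hq.support_nodup, ?_⟩
    intro a ha b hb
    rw [hps] at ha; rw [hqs] at hb
    exact hdisj a ha b hb
  rw [td_eq_of_isPath hG w W hW, td_eq_of_isPath hG w p' hp', td_eq_of_isPath hG w q' hq']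
  rw [hW_def, Walk.edges_append, Walk.edges_cons, List.map_append, List.map_cons,
    List.sum_append, List.sum_cons]
  ring

lemma cover (hG : G.IsTree) {u v : V} (huv : G.Adj u v) (z : V) :
    (G.deleteEdges {s(u, v)}).Reachable u z ∨ (G.deleteEdges {s(u, v)}).Reachable v z := by
  set G' := G.deleteEdges {s(u, v)} with hG'
  have key : ∀ (a b : V), G.Walk a b →
      (G'.Reachable u a ∨ G'.Reachable v a) → (G'.Reachable u b ∨ G'.Reachable v b) := by
    intro a b p
    induction p with
    | nil => exact id
    | @cons c d b h q ih =>
      intro hA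
      apply ih
      by_cases hcd : s(c, d) = s(u, v)
      · rcases Sym2.eq_iff.1 hcd with ⟨rfl, rfl⟩ | ⟨rfl, rfl⟩
        · exact Or.inr (Reachable.refl _)
        · exact Or.inl (Reachable.refl _)
      · have hadj : G'.Adj c d := by
          rw [hG', deleteEdges_adj]
          exact ⟨h, by simpa using hcd⟩
        rcases hA with hA | hA
        · exact Or.inl (hA.trans hadj.reachable)
        · exact Or.inr (hA.trans hadj.reachable)
  obtain ⟨p⟩ := hG.isConnected.preconnected u z
  exact key u z p (Or.inl (Reachable.refl _))

lemma half_ineq (d : V → V → ℝ) (A B : Finset V) (u x : V)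
    (hnn : ∀ a b, 0 ≤ d a b) (hdx : d x x = 0)
    (hxA : x ∈ A) (hA2 : 2 ≤ A.card) (hB : 0 < B.card)
    (htri : ∀ y, d x y ≤ d x u + d u y)
    (hsplit : ∀ y ∈ B, d x y = d x u + d u y)
    (hstab : (∑ y ∈ A, d u y) / ((A.card : ℝ) - 1) ≤ (∑ y ∈ B, d u y) / (B.card : ℝ)) :
    (∑ y ∈ A, d x y) / ((A.card : ℝ) - 1) ≤ (∑ y ∈ B, d x y) / (B.card : ℝ) := by
  have hn : (0:ℝ) < (A.card : ℝ) - 1 := by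
    have : (2:ℝ) ≤ (A.card : ℝ) := by exact_mod_cast hA2
    linarith
  have hm : (0:ℝ) < (B.card : ℝ) := by exact_mod_cast hB
  have hcardE : ((A.erase x).card : ℝ) = (A.card : ℝ) - 1 := by
    rw [Finset.card_erase_of_mem hxA]
    have : 1 ≤ A.card := le_trans one_le_two hA2
    push_cast [this]
    ring
  have h1 : ∑ y ∈ A, d x y ≤ ((A.card : ℝ) - 1) * d x u + ∑ y ∈ A, d u y := by
    have e1 : ∑ y ∈ A, d x y = ∑ y ∈ A.erase x, d x y := by
      rw [← Finset.add_sum_erase A _ hxA, hdx, zero_add]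
    have e2 : ∑ y ∈ A.erase x, d x y ≤ ∑ y ∈ A.erase x, (d x u + d u y) :=
      Finset.sum_le_sum fun y _ => htri y
    have e3 : ∑ y ∈ A.erase x, (d x u + d u y)
        = ((A.card : ℝ) - 1) * d x u + ∑ y ∈ A.erase x, d u y := by
      rw [Finset.sum_add_distrib, Finset.sum_const, nsmul_eq_mul, hcardE]
    have e4 : ∑ y ∈ A.erase x, d u y ≤ ∑ y ∈ A, d u y := by
      have := Finset.add_sum_erase A (fun y => d u y) hxA
      have h0 : 0 ≤ d u x := hnn u x
      linarith
    linarith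
  have hBsum : ∑ y ∈ B, d x y = (B.card : ℝ) * d x u + ∑ y ∈ B, d u y := by
    rw [Finset.sum_congr rfl hsplit, Finset.sum_add_distrib, Finset.sum_const, nsmul_eq_mul]
  have hxu : 0 ≤ d x u := hnn x u
  rw [hBsum]
  have step1 : (∑ y ∈ A, d x y) / ((A.card : ℝ) - 1)
      ≤ d x u + (∑ y ∈ A, d u y) / ((A.card : ℝ) - 1) := by
    rw [← mul_div_cancel_left₀ (d x u) (ne_of_gt hn), ← add_div]
    exact (div_le_div_iff_of_pos_right hn).mpr h1 |>.trans_eq (by ring_nf)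
  have step3 : ((B.card : ℝ) * d x u + ∑ y ∈ B, d u y) / (B.card : ℝ)
      = d x u + (∑ y ∈ B, d u y) / (B.card : ℝ) := by
    rw [add_div, mul_div_cancel_left₀ _ (ne_of_gt hm)]
  rw [step3]
  linarith

lemma two_le_card {s : Finset V} {a : V} (ha : a ∈ s) (hne : s ≠ {a}) : 2 ≤ s.card := by
  by_contra h
  push_neg at h
  have h1 : s.card = 1 := le_antisymm (by omega) (Finset.card_pos.2 ⟨a, ha⟩)
  obtain ⟨b, hb⟩ := Finset.card_eq_one.1 h1
  have : a = b := Finset.mem_singleton.1 (hb ▸ ha)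
  exact hne (this ▸ hb)

end IPStableAux

open scoped Classical in
/-- in a finite tree with positive edge weights, consider the
2-clustering given by the two connected components obtained by deleting an edge
`(u, v)`. If both boundary vertices `u` and `v` are IP-stable, then every
vertex is IP-stable, i.e. the clustering is IP-stable. -/
theorem boundary_vertices_stable_implies_clustering_stable_on_tree
    {V : Type*} [Fintype V] [DecidableEq V]
    (G : SimpleGraph V) (hG : G.IsTree)
    (w : Sym2 V → ℝ) (hw : ∀ e ∈ G.edgeSet, 0 < w e)
    (u v : V) (huv : G.Adj u v)
    (C : Fin 2 → Finset V)
    (hC0 : C 0 = Finset.univ.filter fun z => (G.deleteEdges {s(u, v)}).Reachable u z)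
    (hC1 : C 1 = Finset.univ.filter fun z => (G.deleteEdges {s(u, v)}).Reachable v z)
    (hu : IPStablePt (treeDist G hG w) C u)
    (hv : IPStablePt (treeDist G hG w) C v) :
    ∀ x : V, IPStablePt (treeDist G hG w) C x := by
  classical
  open IPStableAux SimpleGraph in
  set d := treeDist G hG w with hd
  set G' := G.deleteEdges {s(u, v)} with hG'def
  have hmem0 : ∀ z, z ∈ C 0 ↔ G'.Reachable u z := by intro z; simp [hC0, hG'def]
  have hmem1 : ∀ z, z ∈ C 1 ↔ G'.Reachable v z := by intro z; simp [hC1, hG'def]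
  have hbr : ¬ G'.Reachable u v := not_reachable_delete hG huv
  have huC0 : u ∈ C 0 := (hmem0 u).2 (Reachable.refl _)
  have hvC1 : v ∈ C 1 := (hmem1 v).2 (Reachable.refl _)
  have hvC0 : v ∉ C 0 := fun h => hbr ((hmem0 v).1 h)
  have hne01 : C 0 ≠ C 1 := fun h => hvC0 (h ▸ hvC1)
  have hne10 : C 1 ≠ C 0 := hne01.symm
  have hnn : ∀ a b, 0 ≤ d a b := td_nonneg hG w hw
  have hd0 : ∀ a, d a a = 0 := td_self hG w
  have htri : ∀ a b c, d a c ≤ d a b + d b c := td_triangle hG w hw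
  have hswap : G.deleteEdges {s(v, u)} = G' := by
    rw [hG'def, Sym2.eq_swap]
  have hsplit0 : ∀ x, G'.Reachable u x → ∀ y ∈ C 1, d x y = d x u + d u y := by
    intro x hx y hy
    have hyv : G'.Reachable v y := (hmem1 y).1 hy
    have h1 := td_split hG w huv hx hyv
    have h2 := td_split hG w huv (Reachable.refl u) hyv
    rw [← hd] at h1 h2
    have := hd0 u
    linarith
  have hsplit1 : ∀ x, G'.Reachable v x → ∀ y ∈ C 0, d x y = d x v + d v y := by
    intro x hx y hy
    have hyu : G'.Reachable u y := (hmem0 y).1 hy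
    have hx' : (G.deleteEdges {s(v, u)}).Reachable v x := by rw [hswap]; exact hx
    have hy' : (G.deleteEdges {s(v, u)}).Reachable u y := by rw [hswap]; exact hyu
    have h1 := td_split hG w huv.symm hx' hy'
    have h2 := td_split hG w huv.symm (by rw [hswap] : (G.deleteEdges {s(v, u)}).Reachable v v) hy'
    rw [← hd] at h1 h2
    have := hd0 v
    linarith
  intro x i hxi
  by_cases hsing : C i = {x}
  · exact Or.inl hsing
  right
  intro j hj
  have hij : ∀ m : Fin 2, m = 0 ∨ m = 1 := by decide
  rcases hij i with rfl | rfl <;> rcases hij j with rfl | rfl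
  · exact absurd rfl hj
  · -- i = 0, j = 1
    have hx' : G'.Reachable u x := (hmem0 x).1 hxi
    have hA2 : 2 ≤ (C 0).card := two_le_card hxi hsing
    have hstabu : (∑ y ∈ C 0, d u y) / (((C 0).card : ℝ) - 1)
        ≤ (∑ y ∈ C 1, d u y) / ((C 1).card : ℝ) := by
      rcases hu 0 huC0 with h | h
      · rw [h] at hA2; simp at hA2
      · exact h 1 hne10
    exact half_ineq d (C 0) (C 1) u x hnn (hd0 x) hxi hA2 (Finset.card_pos.2 ⟨v, hvC1⟩)
      (fun y => htri x u y) (hsplit0 x hx') hstabu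
  · -- i = 1, j = 0
    have hx' : G'.Reachable v x := (hmem1 x).1 hxi
    have hA2 : 2 ≤ (C 1).card := two_le_card hxi hsing
    have hstabv : (∑ y ∈ C 1, d v y) / (((C 1).card : ℝ) - 1)
        ≤ (∑ y ∈ C 0, d v y) / ((C 0).card : ℝ) := by
      rcases hv 1 hvC1 with h | h
      · rw [h] at hA2; simp at hA2
      · exact h 0 hne01
    exact half_ineq d (C 1) (C 0) v x hnn (hd0 x) hxi hA2 (Finset.card_pos.2 ⟨u, huC0⟩)
      (fun y => htri x v y) (hsplit1 x hx') hstabv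
  · exact absurd rfl hj
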